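/- Let {g_i} be a general pre-F-frame for X_F with respect to Θ_F (Θ_s CB-spaces) and suppose {f_i} ⊂ X_F is such that for every k, {f_i} is a Θ_k*-Bessel sequence for X_{s_k}* and f = Σ g_i(f) f_i in X_F for every f ∈ X_F. Then the operator V : Θ_F → X_F defined by V{d_i} = Σ_{i=1}^∞ d_i f_i is well defined, satisfies V{g_i(f)} = f for all f ∈ X_F, and for each k there is a constant C_k with ‖Vd‖_{s_k} ≤ C_k |||d|||_k for all d ∈ Θ_F. -/

import Mathlib

open Filter Finset

/-- The `i`-th canonical sequence vector. -/
def e (i : ℕ) : ℕ → ℝ := fun j => if j = i then 1 else 0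

/-- Truncation of a sequence to its first `n` coordinates. -/
def trunc (n : ℕ) (c : ℕ → ℝ) : ℕ → ℝ := fun j => if j < n then c j else 0

/-- `N` is a norm on the real vector space `V`. -/
def IsNormOn {V : Type*} [AddCommGroup V] [Module ℝ V] (N : V → ℝ) : Prop :=
  (∀ x, 0 ≤ N x) ∧ (∀ x y, N (x + y) ≤ N x + N y) ∧
  (∀ (a : ℝ) (x : V), N (a • x) = |a| * N x) ∧ ∀ x, N x = 0 → x = 0

section Helpers

variable {V : Type*} [AddCommGroup V] [Module ℝ V]

theorem IsNormOn.zero' {N : V → ℝ} (h : IsNormOn N) : N 0 = 0 := by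
  have := h.2.2.1 0 0; simpa using this

theorem IsNormOn.neg' {N : V → ℝ} (h : IsNormOn N) (x : V) : N (-x) = N x := by
  have := h.2.2.1 (-1) x; simpa using this

theorem IsNormOn.sub_le' {N : V → ℝ} (h : IsNormOn N) (x y : V) :
    N (x - y) ≤ N x + N y := by
  have := h.2.1 x (-y); simpa [sub_eq_add_neg, h.neg'] using this

/-- Hahn–Banach: a norm-attaining dominated functional. -/
theorem hb_dual {N : V → ℝ} (hN : IsNormOn N) (x : V) :
    ∃ φ : V →ₗ[ℝ] ℝ, (∀ y, |φ y| ≤ N y) ∧ φ x = N x := by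
  have H : ∀ c : ℝ, c • x = 0 → c • (N x) = 0 := by
    intro c hc
    rcases eq_or_ne c 0 with rfl | h
    · simp
    · have hx : x = 0 := by
        have := congrArg (fun v => c⁻¹ • v) hc
        simpa [smul_smul, inv_mul_cancel₀ h] using this
      simp [hx, hN.zero']
  set f := LinearPMap.mkSpanSingleton' (σ := RingHom.id ℝ) x (N x) H with hf
  obtain ⟨g, hg1, hg2⟩ := exists_extension_of_le_sublinear f N
    (fun c hc y => by rw [hN.2.2.1 c y, abs_of_pos hc])
    hN.2.1
    (by
      intro z
      have hz : (z : V) ∈ Submodule.span ℝ {x} := z.2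
      obtain ⟨c, hc⟩ := Submodule.mem_span_singleton.1 hz
      have hzz : z = ⟨c • x, by rw [hc]; exact z.2⟩ := Subtype.ext hc.symm
      rw [hzz, LinearPMap.mkSpanSingleton'_apply]
      have : c * N x ≤ |c| * N x :=
        mul_le_mul_of_nonneg_right (le_abs_self c) (hN.1 x)
      calc (c • N x : ℝ) = c * N x := rfl
        _ ≤ |c| * N x := this
        _ = N (c • x) := (hN.2.2.1 c x).symm)
  refine ⟨g, ?_, ?_⟩
  · intro y
    refine abs_le.2 ⟨?_, hg2 y⟩
    have := hg2 (-y)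
    rw [map_neg, hN.neg'] at this
    linarith
  · have hx : x ∈ f.domain := by
      rw [hf, LinearPMap.domain_mkSpanSingleton]
      exact Submodule.mem_span_singleton_self x
    have := hg1 ⟨x, hx⟩
    rw [LinearPMap.mkSpanSingleton'_apply_self] at this
    simpa using this

end Helpers

lemma trunc_eq_sum (n : ℕ) (c : ℕ → ℝ) :
    trunc n c = ∑ i ∈ Finset.range n, c i • e i := by
  funext j
  rw [Finset.sum_apply]
  simp only [Pi.smul_apply, e, smul_eq_mul, mul_ite, mul_one, mul_zero]
  rw [Finset.sum_ite_eq (Finset.range n) j c]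
  simp [trunc, Finset.mem_range]

lemma sum_trunc_smul {X : Type*} [AddCommGroup X] [Module ℝ X]
    (fseq : ℕ → X) (c : ℕ → ℝ) {m M : ℕ} (h : m ≤ M) :
    ∑ i ∈ Finset.range M, trunc m c i • fseq i
      = ∑ i ∈ Finset.range m, c i • fseq i := by
  rw [← Finset.sum_subset (Finset.range_subset_range.2 h)
    (f := fun i => trunc m c i • fseq i)]
  · exact Finset.sum_congr rfl fun i hi => by
      simp [trunc, Finset.mem_range.1 hi]
  · intro i _ hi
    have : ¬ i < m := by simpa using hi
    simp [trunc, this]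

/-- (Theorem diffnew, A₂ ⇒ A₁.) If `{f_i} ⊂ X_F` is a `Θ_k^*`-Bessel
sequence for `X_{s_k}^*` for every `k` and `f = Σ g_i(f) f_i` in `X_F`, then
`V{d_i} := Σ d_i f_i` is a well-defined operator `Θ_F → X_F` with `V{g_i(f)} = f` and
`‖Vd‖_{s_k} ≤ C_k |||d|||_k`. -/
theorem statement8
    {X : Type*} [AddCommGroup X] [Module ℝ X]
    -- `X_F` with its increasing family of norms `‖·‖_s`
    (nX : ℕ → X → ℝ) (hnX : ∀ t, IsNormOn (nX t))
    (hXmono : ∀ t f, nX t f ≤ nX (t + 1) f)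
    -- the Fréchet sequence space `Θ_F = ⋂ Θ_s`, each `Θ_s` a BK-space
    (memT : ℕ → (ℕ → ℝ) → Prop) (nT : ℕ → (ℕ → ℝ) → ℝ)
    (hnT : ∀ t, IsNormOn (nT t))
    (hTmono : ∀ t c, nT t c ≤ nT (t + 1) c)
    (hTnest : ∀ t c, memT (t + 1) c → memT t c)
    (hT0 : ∀ t, memT t 0) (hTadd : ∀ t c d, memT t c → memT t d → memT t (c + d))
    (hTsmul : ∀ t (a : ℝ) c, memT t c → memT t (a • c))
    (hBK : ∀ t i, ∃ K, ∀ c, memT t c → |c i| ≤ K * nT t c)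
    -- `{g_i}` is a general pre-F-frame for `X_F` w.r.t. `Θ_F`
    (g : ℕ → X →ₗ[ℝ] ℝ) (s st : ℕ → ℕ)
    (hs : Monotone s) (hstend : Tendsto s atTop atTop)
    (hst : Monotone st) (hsttend : Tendsto st atTop atTop)
    (hsle : ∀ k, s k ≤ st k)
    (A B : ℕ → ℝ) (hA : ∀ k, 0 < A k) (hB : ∀ k, 0 < B k)
    (hframe : ∀ f : X, (∀ t, memT t (fun i => g i f)) ∧
      ∀ k, A k * nX (s k) f ≤ nT k (fun i => g i f) ∧
        nT k (fun i => g i f) ≤ B k * nX (st k) f)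
    -- `X_F` is complete, the `Θ_s` are CB-spaces
    (hXcomplete : ∀ u : ℕ → X,
      (∀ t, ∀ ε > 0, ∃ N, ∀ m ≥ N, ∀ n ≥ N, nX t (u m - u n) < ε) →
      ∃ x : X, ∀ t, Tendsto (fun n => nX t (u n - x)) atTop (nhds 0))
    (hTe : ∀ t i, memT t (e i))
    (hCB : ∀ t c, memT t c → Tendsto (fun n => nT t (c - trunc n c)) atTop (nhds 0))
    -- the sequence `{f_i}`
    (fseq : ℕ → X)
    -- `{f_i}` is a `Θ_k^*`-Bessel sequence for `X_{s_k}^*` for every `k`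
    (hBessel : ∀ k, ∃ Bb > 0, ∀ (h : X →ₗ[ℝ] ℝ) (M : ℝ),
      (∀ x, |h x| ≤ M * nX (s k) x) →
      ∀ c, memT k c → ∀ n,
        |∑ i ∈ Finset.range n, c i * h (fseq i)| ≤ Bb * M * nT k c)
    -- `f = Σ g_i(f) f_i` in `X_F` for every `f ∈ X_F`
    (hexp : ∀ f : X, ∀ t, Tendsto
      (fun n => nX t (f - ∑ i ∈ Finset.range n, g i f • fseq i)) atTop (nhds 0)) :
    ∃ V : (ℕ → ℝ) → X,
      -- `V` is well defined by `V{d_i} = Σ d_i f_i` on `Θ_F`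
      (∀ c, (∀ t, memT t c) → ∀ t, Tendsto
        (fun n => nX t (V c - ∑ i ∈ Finset.range n, c i • fseq i)) atTop (nhds 0)) ∧
      (∀ f : X, V (fun i => g i f) = f) ∧
      ∀ k, ∃ C > 0, ∀ c, (∀ t, memT t c) → nX (s k) (V c) ≤ C * nT k c := by
  classical
  have nXnn : ∀ t x, 0 ≤ nX t x := fun t => (hnX t).1
  have nXtri : ∀ t x y, nX t (x + y) ≤ nX t x + nX t y := fun t => (hnX t).2.1
  have nXneg : ∀ t x, nX t (-x) = nX t x := fun t => (hnX t).neg'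
  have hXle : ∀ {t t'}, t ≤ t' → ∀ x, nX t x ≤ nX t' x := by
    intro t t' h x
    exact monotone_nat_of_le_succ (f := fun u => nX u x) (fun u => hXmono u x) h
  set S : (ℕ → ℝ) → ℕ → X := fun c n => ∑ i ∈ Finset.range n, c i • fseq i with hS
  -- membership of truncations
  have hmemTrunc : ∀ t c n, memT t (trunc n c) := by
    intro t c n
    rw [trunc_eq_sum]
    exact Finset.sum_induction _ (memT t) (hTadd t) (hT0 t)
      (fun i _ => hTsmul t (c i) (e i) (hTe t i))
  have hmemSub : ∀ t c d, memT t c → memT t d → memT t (c - d) := by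
    intro t c d hc hd
    have := hTadd t c ((-1 : ℝ) • d) hc (hTsmul t (-1) d hd)
    simpa [sub_eq_add_neg, neg_one_smul] using this
  -- key finite-sum estimate via Hahn-Banach and the Bessel bound
  have key : ∀ k, ∃ C, 0 < C ∧ ∀ c, memT k c → ∀ n,
      nX (s k) (S c n) ≤ C * nT k c := by
    intro k
    obtain ⟨Bb, hBb, hBes⟩ := hBessel k
    refine ⟨Bb, hBb, fun c hc n => ?_⟩
    obtain ⟨φ, hφ, hφx⟩ := hb_dual (hnX (s k)) (S c n)
    have h1 : ∀ x, |φ x| ≤ 1 * nX (s k) x := by intro x; simpa using hφ x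
    have h2 := hBes φ 1 h1 c hc n
    have heq : φ (S c n) = ∑ i ∈ Finset.range n, c i * φ (fseq i) := by
      show φ (∑ i ∈ Finset.range n, c i • fseq i) = _
      rw [map_sum]
      exact Finset.sum_congr rfl fun i _ => by rw [map_smul, smul_eq_mul]
    calc nX (s k) (S c n) = φ (S c n) := hφx.symm
      _ ≤ |φ (S c n)| := le_abs_self _
      _ = |∑ i ∈ Finset.range n, c i * φ (fseq i)| := by rw [heq]
      _ ≤ Bb * 1 * nT k c := h2
      _ = Bb * nT k c := by ring
  -- representation of differences of partial sums
  have hdiff : ∀ c m n, S c m - S c n = S (trunc m c - trunc n c) (max m n) := by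
    intro c m n
    show (∑ i ∈ Finset.range m, c i • fseq i) - ∑ i ∈ Finset.range n, c i • fseq i
      = ∑ i ∈ Finset.range (max m n), (trunc m c - trunc n c) i • fseq i
    rw [← sum_trunc_smul fseq c (le_max_left m n),
      ← sum_trunc_smul fseq c (le_max_right m n), ← Finset.sum_sub_distrib]
    exact Finset.sum_congr rfl fun i _ => by rw [Pi.sub_apply, sub_smul]
  -- Cauchy property of the partial sums
  have cauchy : ∀ c, (∀ t, memT t c) →
      ∀ t, ∀ ε > 0, ∃ N, ∀ m ≥ N, ∀ n ≥ N, nX t (S c m - S c n) < ε := by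
    intro c hc t ε hε
    obtain ⟨k, hk⟩ := (hstend.eventually_ge_atTop t).exists
    obtain ⟨C, hC, hCb⟩ := key k
    have hlim := hCB k c (hc k)
    have hpos : (0:ℝ) < ε / (2 * C) := by positivity
    obtain ⟨N, hN⟩ := Filter.eventually_atTop.1 (hlim.eventually_lt_const hpos)
    refine ⟨N, fun m hm n hn => ?_⟩
    have hm1 : memT k (trunc m c - trunc n c) :=
      hmemSub k _ _ (hmemTrunc k c m) (hmemTrunc k c n)
    have hb1 := hCb _ hm1 (max m n)
    rw [← hdiff c m n] at hb1
    have hsplit : nT k (trunc m c - trunc n c)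
        ≤ nT k (c - trunc n c) + nT k (c - trunc m c) := by
      have hrw : trunc m c - trunc n c = (c - trunc n c) - (c - trunc m c) := by
        abel
      rw [hrw]
      exact (hnT k).sub_le' _ _
    have h3 : nT k (trunc m c - trunc n c) < ε / (2*C) + ε / (2*C) :=
      lt_of_le_of_lt hsplit (add_lt_add (hN n hn) (hN m hm))
    have h5 : C * nT k (trunc m c - trunc n c) < C * (ε/(2*C) + ε/(2*C)) :=
      mul_lt_mul_of_pos_left h3 hC
    have h6 : C * (ε/(2*C) + ε/(2*C)) = ε := by
      field_simp
      ring
    have h7 : nX t (S c m - S c n) ≤ nX (s k) (S c m - S c n) := hXle hk _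
    linarith
  -- the limit operator
  have exlim : ∀ c, (∀ t, memT t c) → ∃ x : X, ∀ t,
      Tendsto (fun n => nX t (S c n - x)) atTop (nhds 0) :=
    fun c h => hXcomplete (S c) (cauchy c h)
  set V : (ℕ → ℝ) → X := fun c =>
    if h : ∀ t, memT t c then (exlim c h).choose else 0 with hVdef
  have hVlim : ∀ c, (∀ t, memT t c) → ∀ t,
      Tendsto (fun n => nX t (S c n - V c)) atTop (nhds 0) := by
    intro c h t
    have : V c = (exlim c h).choose := by rw [hVdef]; simp [dif_pos h]
    rw [this]
    exact (exlim c h).choose_spec t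
  have hVlim' : ∀ c, (∀ t, memT t c) → ∀ t,
      Tendsto (fun n => nX t (V c - S c n)) atTop (nhds 0) := by
    intro c h t
    have heq : (fun n => nX t (V c - S c n)) = fun n => nX t (S c n - V c) := by
      funext n; rw [← neg_sub, nXneg]
    rw [heq]
    exact hVlim c h t
  refine ⟨V, ?_, ?_, ?_⟩
  · intro c h t
    exact hVlim' c h t
  · intro f
    have hm := (hframe f).1
    have hgoal : nX 0 (V (fun i => g i f) - f) = 0 := by
      have hle : ∀ n, nX 0 (V (fun i => g i f) - f)
          ≤ nX 0 (V (fun i => g i f) - S (fun i => g i f) n)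
            + nX 0 (f - S (fun i => g i f) n) := by
        intro n
        have h1 := nXtri 0 (V (fun i => g i f) - S (fun i => g i f) n)
          (S (fun i => g i f) n - f)
        rw [sub_add_sub_cancel] at h1
        have h2 : nX 0 (S (fun i => g i f) n - f)
            = nX 0 (f - S (fun i => g i f) n) := by
          rw [← nXneg 0 (f - S (fun i => g i f) n), neg_sub]
        linarith
      have hlim0 : Tendsto (fun n =>
          nX 0 (V (fun i => g i f) - S (fun i => g i f) n)
            + nX 0 (f - S (fun i => g i f) n)) atTop (nhds 0) := by
        simpa using (hVlim' _ hm 0).add (hexp f 0)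
      exact le_antisymm (ge_of_tendsto' hlim0 hle) (nXnn 0 _)
    have := (hnX 0).2.2.2 _ hgoal
    exact sub_eq_zero.mp this
  · intro k
    obtain ⟨C, hC, hCb⟩ := key k
    refine ⟨C, hC, ?_⟩
    intro c hc
    have hle : ∀ n, nX (s k) (V c)
        ≤ nX (s k) (V c - S c n) + (C * nT k c + C * nT k (c - trunc n c)) := by
      intro n
      have h1 : nX (s k) (V c) ≤ nX (s k) (V c - S c n) + nX (s k) (S c n) := by
        have := nXtri (s k) (V c - S c n) (S c n)
        simpa using this
      have h2 := hCb (trunc n c) (hmemTrunc k c n) n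
      have h3 : S (trunc n c) n = S c n := by
        show ∑ i ∈ Finset.range n, trunc n c i • fseq i
          = ∑ i ∈ Finset.range n, c i • fseq i
        exact sum_trunc_smul fseq c le_rfl
      rw [h3] at h2
      have h4 : nT k (trunc n c) ≤ nT k c + nT k (c - trunc n c) := by
        have := (hnT k).sub_le' c (c - trunc n c)
        simpa [sub_sub_cancel] using this
      have h5 : C * nT k (trunc n c) ≤ C * (nT k c + nT k (c - trunc n c)) :=
        mul_le_mul_of_nonneg_left h4 hC.le
      rw [mul_add] at h5
      linarith
    have hlim0 : Tendsto (fun n =>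
        nX (s k) (V c - S c n) + (C * nT k c + C * nT k (c - trunc n c)))
        atTop (nhds (0 + (C * nT k c + C * 0))) :=
      (hVlim' c hc (s k)).add (tendsto_const_nhds.add ((hCB k c (hc k)).const_mul C))
    have := ge_of_tendsto' (by simpa using hlim0) hle
    simpa using this
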